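/- Let R be a domain, ν a valuation on R with values in a linearly ordered abelian group, and suppose r, x₁, …, xₙ ∈ R with r in the integral closure of the ideal (x₁, …, xₙ) and ν non-negative on R. Then ν(r) ≥ minᵢ ν(xᵢ). -/

import Mathlib

/-- `r` is integral over the ideal `I`. -/
def IsIntegralOverIdeal {R : Type*} [CommRing R] (I : Ideal R) (r : R) : Prop :=
  ∃ n : ℕ, 0 < n ∧ ∃ a : ℕ → R, (∀ i ∈ Finset.Icc 1 n, a i ∈ I ^ i) ∧
    r ^ n + ∑ i ∈ Finset.Icc 1 n, a i * r ^ (n - i) = 0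

/-- If `ν` is a valuation (with values in `WithTop Γ`, `ν a = ⊤ ↔ a = 0`)
on a domain `R` which is non-negative on `R`, and `r` lies in the integral closure of the
ideal `(x₁,…,xₙ)`, then `ν r ≥ minᵢ ν (xᵢ)`. -/
theorem stmt_18 {R Γ : Type*} [CommRing R] [IsDomain R] [AddCommGroup Γ] [LinearOrder Γ] [IsOrderedAddMonoid Γ]
    (ν : R → WithTop Γ)
    (h0 : ∀ a : R, ν a = ⊤ ↔ a = 0)
    (hmul : ∀ a b : R, ν (a * b) = ν a + ν b)
    (hadd : ∀ a b : R, min (ν a) (ν b) ≤ ν (a + b))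
    (hnonneg : ∀ a : R, 0 ≤ ν a)
    {n : ℕ} (x : Fin n → R) (r : R)
    (hr : IsIntegralOverIdeal (Ideal.span (Set.range x)) r) :
    Finset.univ.inf (fun i => ν (x i)) ≤ ν r := by
  classical
  set m : WithTop Γ := Finset.univ.inf (fun i => ν (x i)) with hm
  -- ν 1 = 0
  have hν1 : ν 1 = 0 := by
    have h := hmul 1 1
    rw [one_mul] at h
    have ht : ν 1 ≠ ⊤ := fun h' => one_ne_zero ((h0 1).mp h')
    obtain ⟨g, hg⟩ := WithTop.ne_top_iff_exists.mp ht
    rw [← hg] at h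
    have : g = g + g := by exact_mod_cast h
    have hg0 : g = 0 := (left_eq_add.mp this)
    rw [← hg, hg0]; rfl
  -- ν (-b) = ν b
  have hνneg : ∀ b : R, ν (-b) = ν b := by
    intro b
    have h1 : ν ((-1 : R) * (-1)) = ν (-1) + ν (-1) := hmul _ _
    rw [neg_one_mul, neg_neg, hν1] at h1
    have ht : ν (-1 : R) ≠ ⊤ := fun h' => by
      have := (h0 _).mp h'; simpa using this
    obtain ⟨g, hg⟩ := WithTop.ne_top_iff_exists.mp ht
    rw [← hg] at h1
    have hgg : g + g = (0 : Γ) := by exact_mod_cast h1.symm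
    have hgnn : (0 : WithTop Γ) ≤ (g : WithTop Γ) := hg ▸ hnonneg (-1)
    have hgnn' : (0 : Γ) ≤ g := by exact_mod_cast hgnn
    have hg0 : g = 0 := le_antisymm
      (by calc g ≤ g + g := le_add_of_nonneg_left hgnn'
            _ = 0 := hgg) hgnn'
    have : ν (-b) = ν (-1) + ν b := by rw [← hmul, neg_one_mul]
    rw [this, ← hg, hg0]
    simp
  -- ν (r^k) = k • ν r
  have hνpow : ∀ (b : R) (k : ℕ), ν (b ^ k) = k • ν b := by
    intro b k
    induction k with
    | zero => simpa using hν1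
    | succ k ih => rw [pow_succ, hmul, ih, succ_nsmul]
  -- inf over sum
  have hsum : ∀ (s : Finset ℕ) (f : ℕ → R),
      (s.inf fun i => ν (f i)) ≤ ν (∑ i ∈ s, f i) := by
    intro s f
    induction s using Finset.cons_induction with
    | empty => simp [(h0 0).mpr rfl]
    | cons a s ha ih =>
        rw [Finset.sum_cons, Finset.inf_cons]
        exact le_trans (min_le_min le_rfl ih) (hadd _ _)
  -- elements of span
  have hspan : ∀ a ∈ Ideal.span (Set.range x), m ≤ ν a := by
    intro a ha
    induction ha using Submodule.span_induction with
    | mem y hy =>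
        obtain ⟨i, rfl⟩ := hy
        exact Finset.inf_le (Finset.mem_univ i)
    | zero => rw [(h0 0).mpr rfl]; exact le_top
    | add y z _ _ hy hz => exact le_trans (le_min hy hz) (hadd y z)
    | smul c y _ hy =>
        rw [smul_eq_mul, hmul]
        calc m ≤ ν y := hy
        _ = 0 + ν y := (zero_add _).symm
        _ ≤ ν c + ν y := add_le_add_left (hnonneg c) _
  -- elements of span ^ j
  have hspanpow : ∀ (j : ℕ), ∀ a ∈ (Ideal.span (Set.range x)) ^ j, j • m ≤ ν a := by
    intro j
    induction j with
    | zero => intro a _; simpa using hnonneg a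
    | succ j ih =>
        intro a ha
        rw [pow_succ] at ha
        refine Submodule.mul_induction_on ha ?_ ?_
        · intro y hy z hz
          rw [hmul, succ_nsmul, add_comm (j • m) m, add_comm (ν y)]
          exact add_le_add (hspan z hz) (ih y hy)
        · intro y z hy hz
          exact le_trans (le_min hy hz) (hadd y z)
  obtain ⟨N, hN, a, haI, heq⟩ := hr
  by_cases hrt : ν r = ⊤
  · rw [hrt]; exact le_top
  -- m is ≥ ν r or contradiction
  by_contra hcon
  push_neg at hcon
  have hrm : ν r < m := hcon
  obtain ⟨g, hg⟩ := WithTop.ne_top_iff_exists.mp hrt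
  -- bound each term
  have hterm : ∀ i ∈ Finset.Icc 1 N, m + (N - 1) • ν r ≤ ν (a i * r ^ (N - i)) := by
    intro i hi
    obtain ⟨hi1, hiN⟩ := Finset.mem_Icc.mp hi
    rw [hmul, hνpow]
    have h1 : i • m ≤ ν (a i) := hspanpow i (a i) (haI i hi)
    have h2 : m + (i - 1) • ν r ≤ i • m := by
      calc m + (i - 1) • ν r ≤ m + (i - 1) • m :=
            add_le_add_right (nsmul_le_nsmul_right hrm.le _) m
        _ = (i - 1) • m + m := add_comm _ _
        _ = ((i - 1) + 1) • m := (succ_nsmul m (i - 1)).symm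
        _ = i • m := by congr 1; omega
    calc m + (N - 1) • ν r = m + ((i - 1) • ν r + (N - i) • ν r) := by
            rw [← add_nsmul]; congr 2; omega
      _ = (m + (i - 1) • ν r) + (N - i) • ν r := by rw [add_assoc]
      _ ≤ i • m + (N - i) • ν r := add_le_add_left h2 _
      _ ≤ ν (a i) + (N - i) • ν r := add_le_add_left h1 _
  -- main inequality
  have hrN : r ^ N = -∑ i ∈ Finset.Icc 1 N, a i * r ^ (N - i) := by
    linear_combination heq
  have hkey : m + (N - 1) • ν r ≤ N • ν r := by
    calc m + (N - 1) • ν r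
        ≤ (Finset.Icc 1 N).inf (fun i => ν (a i * r ^ (N - i))) :=
          Finset.le_inf hterm
      _ ≤ ν (∑ i ∈ Finset.Icc 1 N, a i * r ^ (N - i)) := hsum _ _
      _ = ν (-∑ i ∈ Finset.Icc 1 N, a i * r ^ (N - i)) := (hνneg _).symm
      _ = ν (r ^ N) := by rw [← hrN]
      _ = N • ν r := hνpow r N
  have hNsplit : N • ν r = (N - 1) • ν r + ν r := by
    conv_lhs => rw [show N = (N - 1) + 1 from by omega]
    rw [succ_nsmul]
  rw [hNsplit, add_comm ((N - 1) • ν r) (ν r)] at hkey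
  -- cancel (N-1) • ν r, which is not ⊤
  have hfin : (N - 1) • ν r ≠ ⊤ := by
    rw [← hg, ← WithTop.coe_nsmul]
    exact WithTop.coe_ne_top
  have hmle : m ≤ ν r := (WithTop.add_le_add_iff_right hfin).mp hkey
  exact absurd hmle (not_le.mpr hrm)
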